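/- arXiv:1906.10743 — 2 statements merged into one kernel-verified Lean document; each statement's English description precedes it below -/
import Mathlib

section
/- Suppose q : Ω → ℝ is the phase shift function of a finite difference operator D (so that partial Fourier transform of D^j v equals (2πi q(ω))^j v̂(ω)), A is a bounded linear operator on a Banach space X commuting with Fourier-frequency multiplication, and u : ℝ → X is an integrable function satisfying u'(t) + A u(t) = f(t) for all t, so that (2πiω) û(ω) + A û(ω) = f̂(ω). Then v defined by v̂(ω) = 1_Ω(ω) û(q(ω)) satisfies the transformed finite difference equation: for all t, D v(t) + A v(t) = g(t), where g(t) = ∫_Ω e^{2πitω} f̂(q(ω)) dω. -/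
open MeasureTheory Set
open scoped FourierTransform

private lemma exp_smul_integrableOn {X : Type*} [NormedAddCommGroup X] [NormedSpace ℂ X]
    {Ω : Set ℝ} {w : ℝ → X} (hw : IntegrableOn w Ω) (a : ℝ) :
    IntegrableOn (fun ω : ℝ => Complex.exp (2 * Real.pi * Complex.I * a * ω) • w ω) Ω := by
  have asm : AEStronglyMeasurable
      (fun ω : ℝ => Complex.exp (2 * Real.pi * Complex.I * a * ω) • w ω)
      (volume.restrict Ω) :=
    (Continuous.aestronglyMeasurable (by continuity)).smul hw.aestronglyMeasurable
  refine Integrable.mono' hw.norm asm ?_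
  filter_upwards with ω
  rw [norm_smul]
  have h : Complex.exp (2 * Real.pi * Complex.I * a * ω)
      = Complex.exp ((2 * Real.pi * a * ω : ℝ) * Complex.I) := by
    congr 1; push_cast; ring
  rw [h, Complex.norm_exp_ofReal_mul_I, one_mul]

/-- Forward direction of Theorem 2.2 (K = 1, first order): if `u` solves
`u' + A u = f` in the Fourier sense, then `v` with `v̂ = 1_Ω û∘q` satisfies the
dispersion-corrected finite difference equation `D v + A v = g`, where
`g(t) = ∫_Ω e^{2πitω} f̂(q(ω)) dω`. -/
theorem stmt9 {X : Type*} [NormedAddCommGroup X] [NormedSpace ℂ X] [CompleteSpace X]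
    (A : X →L[ℂ] X) (Δt : ℝ) (hΔt : 0 < Δt)
    (Z : Finset ℤ) (c : ℤ → ℂ) (q : ℝ → ℝ) (Ω : Set ℝ) (hΩ : MeasurableSet Ω)
    (hq : ∀ ω : ℝ, (2 * Real.pi * Complex.I) * (q ω : ℂ) =
      ∑ n ∈ Z, c n * Complex.exp (2 * Real.pi * Complex.I * (n : ℂ) * ω * Δt))
    (u f : ℝ → X) (hu : Integrable u) (hf : Integrable f)
    (hrel : ∀ ω : ℝ, (2 * Real.pi * Complex.I * ω) • 𝓕 u ω + A (𝓕 u ω) = 𝓕 f ω)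
    (hint : IntegrableOn (fun ω => 𝓕 u (q ω)) Ω)
    (hintf : IntegrableOn (fun ω => 𝓕 f (q ω)) Ω)
    (v : ℝ → X)
    (hv : ∀ t, v t = ∫ ω in Ω, Complex.exp (2 * Real.pi * Complex.I * t * ω) • 𝓕 u (q ω))
    (t : ℝ) :
    (∑ n ∈ Z, c n • v (t + n * Δt)) + A (v t) =
      ∫ ω in Ω, Complex.exp (2 * Real.pi * Complex.I * t * ω) • 𝓕 f (q ω) := by
  have hAu : IntegrableOn (fun ω => A (𝓕 u (q ω))) Ω := A.integrable_comp hint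
  have hqu : IntegrableOn
      (fun ω => ((2 * Real.pi * Complex.I * (q ω : ℂ))) • 𝓕 u (q ω)) Ω := by
    have h : (fun ω => ((2 * Real.pi * Complex.I * (q ω : ℂ))) • 𝓕 u (q ω))
        = fun ω => 𝓕 f (q ω) - A (𝓕 u (q ω)) := by
      funext ω
      exact eq_sub_of_add_eq (hrel (q ω))
    rw [h]; exact hintf.sub hAu
  have h1 : (∑ n ∈ Z, c n • v (t + n * Δt))
      = ∫ ω in Ω, Complex.exp (2 * Real.pi * Complex.I * t * ω) •
          ((2 * Real.pi * Complex.I * (q ω : ℂ)) • 𝓕 u (q ω)) := by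
    calc ∑ n ∈ Z, c n • v (t + n * Δt)
        = ∑ n ∈ Z, ∫ ω in Ω, c n •
            (Complex.exp (2 * Real.pi * Complex.I * ((t + n * Δt : ℝ) : ℂ) * ω) • 𝓕 u (q ω)) := by
          refine Finset.sum_congr rfl fun n _ => ?_
          rw [hv, ← integral_smul]
      _ = ∫ ω in Ω, ∑ n ∈ Z, c n •
            (Complex.exp (2 * Real.pi * Complex.I * ((t + n * Δt : ℝ) : ℂ) * ω) • 𝓕 u (q ω)) := by
          rw [integral_finset_sum]
          exact fun n _ => (exp_smul_integrableOn hint (t + n * Δt)).smul (c n)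
      _ = ∫ ω in Ω, Complex.exp (2 * Real.pi * Complex.I * t * ω) •
            ((2 * Real.pi * Complex.I * (q ω : ℂ)) • 𝓕 u (q ω)) := by
          refine integral_congr_ae (Filter.Eventually.of_forall fun ω => ?_)
          simp only [smul_smul]
          rw [← Finset.sum_smul]
          congr 1
          calc ∑ n ∈ Z, c n * Complex.exp (2 * Real.pi * Complex.I * ((t + n * Δt : ℝ) : ℂ) * ω)
              = Complex.exp (2 * Real.pi * Complex.I * t * ω) *
                  ∑ n ∈ Z, c n * Complex.exp (2 * Real.pi * Complex.I * (n : ℂ) * ω * Δt) := by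
                rw [Finset.mul_sum]
                refine Finset.sum_congr rfl fun n _ => ?_
                have hE : Complex.exp (2 * Real.pi * Complex.I * ((t + n * Δt : ℝ) : ℂ) * ω)
                    = Complex.exp (2 * Real.pi * Complex.I * t * ω) *
                      Complex.exp (2 * Real.pi * Complex.I * (n : ℂ) * ω * Δt) := by
                  rw [← Complex.exp_add]
                  congr 1
                  push_cast
                  ring
                rw [hE]; ring
            _ = Complex.exp (2 * Real.pi * Complex.I * t * ω) *
                  (2 * Real.pi * Complex.I * (q ω : ℂ)) := by
                rw [← hq ω]
  have h2 : A (v t) = ∫ ω in Ω, Complex.exp (2 * Real.pi * Complex.I * t * ω) •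
      A (𝓕 u (q ω)) := by
    rw [hv, ← ContinuousLinearMap.integral_comp_comm A (exp_smul_integrableOn hint t)]
    simp only [ContinuousLinearMap.map_smul]
  rw [h1, h2, ← integral_add (exp_smul_integrableOn hqu t) (exp_smul_integrableOn hAu t)]
  refine integral_congr_ae (Filter.Eventually.of_forall fun ω => ?_)
  simp only [← smul_add, hrel (q ω)]
end

section
/- Conversely to the forward direction: let D be a finite difference operator with real phase shift function q on Ω, A a bounded linear operator, and v, g integrable functions satisfying D v(t) + A v(t) = g(t) for all t ∈ ℝ, so that (2πi q(ω)) v̂(ω) + A v̂(ω) = ĝ(ω). Define u(t) = ∫_Ω e^{2πit q(ω)} v̂(ω) q'(ω) dω and f(t) = ∫_Ω e^{2πit q(ω)} ĝ(ω) q'(ω) dω (assuming q is C¹ and the integrals converge absolutely and admit differentiation under the integral sign). Then u'(t) + A u(t) = f(t) for all t. -/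
open MeasureTheory Set
open scoped FourierTransform

/-- Converse direction of Theorem 2.2 (K = 1, first order): if `v` satisfies the
finite difference equation `D v + A v = g` in the Fourier sense, i.e.
`2πi q(ω) v̂(ω) + A v̂(ω) = ĝ(ω)`, then `u = I(v)` and `f = I(g)` (inverse time
dispersion transforms) satisfy `u' + A u = f`. -/
theorem stmt10 {X : Type*} [NormedAddCommGroup X] [NormedSpace ℂ X] [CompleteSpace X]
    (A : X →L[ℂ] X) (q q' : ℝ → ℝ) (Ω : Set ℝ) (hΩ : MeasurableSet Ω)
    (hq : ∀ ω ∈ Ω, HasDerivAt q (q' ω) ω) (hqC : ContinuousOn q' Ω)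
    (v g : ℝ → X) (hv : Integrable v) (hg : Integrable g)
    (hrel : ∀ ω : ℝ, (2 * Real.pi * Complex.I * (q ω : ℂ)) • 𝓕 v ω + A (𝓕 v ω) = 𝓕 g ω)
    (hint : IntegrableOn (fun ω => ((1 + |q ω|) * |q' ω|) • 𝓕 v ω) Ω)
    (hintg : IntegrableOn (fun ω => (q' ω : ℂ) • 𝓕 g ω) Ω)
    (u f : ℝ → X)
    (hu : ∀ t, u t =
      ∫ ω in Ω, (Complex.exp (2 * Real.pi * Complex.I * t * (q ω)) * (q' ω : ℂ)) • 𝓕 v ω)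
    (hf : ∀ t, f t =
      ∫ ω in Ω, (Complex.exp (2 * Real.pi * Complex.I * t * (q ω)) * (q' ω : ℂ)) • 𝓕 g ω) :
    ∀ t, HasDerivAt u (f t - A (u t)) t := by
  intro t
  have hFv : Continuous (𝓕 v) :=
    VectorFourier.fourierIntegral_continuous Real.continuous_fourierChar
      (by exact continuous_inner) hv
  have hFg : Continuous (𝓕 g) :=
    VectorFourier.fourierIntegral_continuous Real.continuous_fourierChar
      (by exact continuous_inner) hg
  have hqc : ContinuousOn q Ω := fun ω hω => ((hq ω hω).continuousAt).continuousWithinAt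
  -- norm of the exponential is 1
  have hexp : ∀ (s a : ℝ), ‖Complex.exp (2 * Real.pi * Complex.I * s * a)‖ = 1 := by
    intro s a
    rw [Complex.norm_exp]
    have : (2 * (Real.pi : ℂ) * Complex.I * s * a).re = 0 := by
      simp [Complex.mul_re, Complex.mul_im]
    rw [this, Real.exp_zero]
  set F : ℝ → ℝ → X := fun s ω =>
    (Complex.exp (2 * Real.pi * Complex.I * s * (q ω)) * (q' ω : ℂ)) • 𝓕 v ω with hF
  set F' : ℝ → ℝ → X := fun s ω =>
    ((2 * Real.pi * Complex.I * (q ω : ℂ)) *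
      Complex.exp (2 * Real.pi * Complex.I * s * (q ω)) * (q' ω : ℂ)) • 𝓕 v ω with hF'
  have hnormdom : ∀ ω : ℝ,
      ‖((1 + |q ω|) * |q' ω|) • 𝓕 v ω‖ = (1 + |q ω|) * |q' ω| * ‖𝓕 v ω‖ := by
    intro ω
    rw [norm_smul, Real.norm_eq_abs, abs_of_nonneg (by positivity)]
  -- continuity of integrands on Ω
  have hcoefc : ∀ s : ℝ, ContinuousOn
      (fun ω => Complex.exp (2 * Real.pi * Complex.I * s * (q ω))) Ω := by
    intro s
    exact Complex.continuous_exp.comp_continuousOn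
      ((continuousOn_const).mul (Complex.continuous_ofReal.comp_continuousOn hqc))
  have hq'c : ContinuousOn (fun ω => (q' ω : ℂ)) Ω :=
    Complex.continuous_ofReal.comp_continuousOn hqC
  have hmeasF : ∀ s : ℝ, AEStronglyMeasurable (F s) (volume.restrict Ω) :=
    fun s => (((hcoefc s).mul hq'c).smul hFv.continuousOn).aestronglyMeasurable hΩ
  have hmeasF' : AEStronglyMeasurable (F' t) (volume.restrict Ω) := by
    refine (ContinuousOn.aestronglyMeasurable ?_ hΩ)
    exact ((((continuousOn_const.mul (Complex.continuous_ofReal.comp_continuousOn hqc)).mul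
      (hcoefc t)).mul hq'c).smul hFv.continuousOn)
  -- integrability of F s
  have hIv : ∀ s : ℝ, IntegrableOn (F s) Ω := by
    intro s
    refine Integrable.mono hint (hmeasF s) (Filter.Eventually.of_forall fun ω => ?_)
    have h2 : ‖F s ω‖ = |q' ω| * ‖𝓕 v ω‖ := by
      rw [hF]
      simp [norm_smul, norm_mul, hexp s (q ω)]
    rw [h2, hnormdom ω]
    have hle : |q' ω| ≤ (1 + |q ω|) * |q' ω| :=
      le_mul_of_one_le_left (abs_nonneg _) (by linarith [abs_nonneg (q ω)])
    exact mul_le_mul_of_nonneg_right hle (norm_nonneg _)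
  -- integrability of g-integrand
  have hIg : IntegrableOn
      (fun ω => (Complex.exp (2 * Real.pi * Complex.I * t * (q ω)) * (q' ω : ℂ)) • 𝓕 g ω) Ω := by
    refine Integrable.mono hintg
      ((((hcoefc t).mul hq'c).smul hFg.continuousOn).aestronglyMeasurable hΩ)
      (Filter.Eventually.of_forall fun ω => ?_)
    simp [norm_smul, norm_mul, hexp t (q ω)]
  -- bound on F'
  have hbound : ∀ ω : ℝ, ∀ s ∈ Metric.ball t 1,
      ‖F' s ω‖ ≤ 2 * Real.pi * ‖((1 + |q ω|) * |q' ω|) • 𝓕 v ω‖ := by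
    intro ω s _
    have h2 : ‖F' s ω‖ = 2 * Real.pi * |q ω| * |q' ω| * ‖𝓕 v ω‖ := by
      rw [hF']
      rw [norm_smul, norm_mul, norm_mul, hexp s (q ω)]
      simp only [norm_mul, map_mul, Complex.norm_I, Complex.norm_two,
        Complex.norm_real, Real.norm_eq_abs, abs_of_pos Real.pi_pos]
      ring
    rw [h2, hnormdom ω]
    calc 2 * Real.pi * |q ω| * |q' ω| * ‖𝓕 v ω‖
        = 2 * Real.pi * (|q ω| * (|q' ω| * ‖𝓕 v ω‖)) := by ring
      _ ≤ 2 * Real.pi * ((1 + |q ω|) * (|q' ω| * ‖𝓕 v ω‖)) := by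
          gcongr
          linarith [abs_nonneg (q ω)]
      _ = 2 * Real.pi * ((1 + |q ω|) * |q' ω| * ‖𝓕 v ω‖) := by ring
  -- derivative in s
  have hdiff : ∀ ω : ℝ, ∀ s ∈ Metric.ball t 1, HasDerivAt (F · ω) (F' s ω) s := by
    intro ω s _
    have hc : HasDerivAt (fun z : ℂ => Complex.exp (2 * Real.pi * Complex.I * (q ω : ℂ) * z))
        (Complex.exp (2 * Real.pi * Complex.I * (q ω : ℂ) * s) *
          (2 * Real.pi * Complex.I * (q ω : ℂ))) (s : ℂ) := by
      simpa using ((hasDerivAt_id (s : ℂ)).const_mul (2 * Real.pi * Complex.I * (q ω : ℂ))).cexp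
    have hcr := hc.comp_ofReal
    have harg : ∀ r : ℝ, 2 * (Real.pi : ℂ) * Complex.I * (q ω : ℂ) * (r : ℂ) =
        2 * Real.pi * Complex.I * (r : ℂ) * (q ω : ℂ) := fun r => by ring
    have hcr' : HasDerivAt (fun r : ℝ => Complex.exp (2 * Real.pi * Complex.I * r * (q ω)))
        (Complex.exp (2 * Real.pi * Complex.I * s * (q ω)) *
          (2 * Real.pi * Complex.I * (q ω : ℂ))) s := by
      simpa only [harg] using hcr
    have hd := (hcr'.mul_const ((q' ω : ℂ))).smul_const (𝓕 v ω)
    rw [hF']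
    convert hd using 2
    ring
  have hdom := hasDerivAt_integral_of_dominated_loc_of_deriv_le (μ := volume.restrict Ω)
    (F := F) (F' := F') (x₀ := t)
    (bound := fun ω => 2 * Real.pi * ‖((1 + |q ω|) * |q' ω|) • 𝓕 v ω‖)
    (Metric.ball_mem_nhds t one_pos) (Filter.Eventually.of_forall hmeasF) (hIv t) hmeasF'
    (Filter.Eventually.of_forall hbound)
    (hint.norm.const_mul _)
    (Filter.Eventually.of_forall hdiff)
  have hval : f t - A (u t) = ∫ ω in Ω, F' t ω := by
    have hAu : A (u t) = ∫ ω in Ω, A (F t ω) := by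
      rw [hu t, ← ContinuousLinearMap.integral_comp_comm A (hIv t)]
    rw [hf t, hAu, ← integral_sub hIg (A.integrable_comp (hIv t))]
    refine integral_congr_ae (Filter.Eventually.of_forall fun ω => ?_)
    have h1 : 𝓕 g ω - A (𝓕 v ω) = (2 * Real.pi * Complex.I * (q ω : ℂ)) • 𝓕 v ω := by
      rw [← hrel ω]; abel
    show _ - A (F t ω) = F' t ω
    rw [hF, hF']
    rw [A.map_smul, ← smul_sub, h1, smul_smul]
    congr 1
    ring
  rw [hval, show u = fun s => ∫ ω in Ω, F s ω from funext hu]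
  exact hdom.2
end
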